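/- arXiv:1406.2233 — 4 statements merged into one kernel-verified Lean document; each statement's English description precedes it below -/
import Mathlib

section
/- For all n ≥ 0 and all z on the unit circle, |P_n(z)| ≤ 2^{(n+1)/2}, i.e., |P_n(z)|^2 ≤ 2^{n+1}, where P_n is the n-th Rudin-Shapiro polynomial. -/
open Complex Real

noncomputable def RS : ℕ → (ℂ → ℂ) × (ℂ → ℂ)
  | 0 => (fun _ => 1, fun _ => 1)
  | n + 1 =>
      (fun z => (RS n).1 z + z ^ (2 ^ n) * (RS n).2 z,
       fun z => (RS n).1 z - z ^ (2 ^ n) * (RS n).2 z)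

noncomputable def P (n : ℕ) (z : ℂ) : ℂ := (RS n).1 z

noncomputable def Q (n : ℕ) (z : ℂ) : ℂ := (RS n).2 z

lemma rs_sum_sq (n : ℕ) (z : ℂ) (hz : ‖z‖ = 1) :
    ‖P n z‖ ^ 2 + ‖Q n z‖ ^ 2 = 2 ^ (n + 1) := by
  induction n with
  | zero => simp [P, Q, RS]; norm_num
  | succ n ih =>
    have hzn : ‖z ^ (2 ^ n) * Q n z‖ = ‖Q n z‖ := by
      rw [norm_mul, norm_pow, hz, one_pow, one_mul]
    have key : ∀ a b : ℂ, ‖a + b‖ ^ 2 + ‖a - b‖ ^ 2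
        = 2 * (‖a‖ ^ 2 + ‖b‖ ^ 2) := by
      intro a b
      simp only [Complex.sq_norm, Complex.normSq_add, Complex.normSq_sub]
      ring
    have hP : P (n+1) z = P n z + z ^ (2 ^ n) * Q n z := rfl
    have hQ : Q (n+1) z = P n z - z ^ (2 ^ n) * Q n z := rfl
    rw [hP, hQ, key, hzn, ih]
    ring

theorem rs_sup_bound (n : ℕ) (z : ℂ) (hz : ‖z‖ = 1) :
    ‖P n z‖ ^ 2 ≤ 2 ^ (n + 1) := by
  have h := rs_sum_sq n z hz
  nlinarith [sq_nonneg (‖Q n z‖)]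
end

section
/- Let n ≥ 2 be an integer, N := 2^n, and z_j := e^{2πij/N} for j ∈ ℤ. If j is even, then P_n(z_j) = 2 P_{n-2}(z_j), and if j = 2u+1 is odd, then P_n(z_j) = (-1)^{(j-1)/2} · 2i · Q_{n-2}(z_j), where i is the imaginary unit. -/
open Complex Real

lemma key (m : ℕ) (j : ℤ) :
    Complex.exp (2 * Real.pi * Complex.I * j / ((2 ^ (m + 2) : ℕ) : ℂ)) ^ (2 ^ m : ℕ)
      = Complex.I ^ j := by
  rw [← Complex.exp_nat_mul]
  have h1 : ((2 ^ m : ℕ) : ℂ) * (2 * Real.pi * Complex.I * j / ((2 ^ (m + 2) : ℕ) : ℂ))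
      = j * ((Real.pi / 2 : ℝ) * Complex.I) := by
    have h2 : ((2 ^ (m + 2) : ℕ) : ℂ) ≠ 0 := Nat.cast_ne_zero.mpr (by positivity)
    push_cast
    field_simp
    ring
  rw [h1, Complex.exp_int_mul]
  congr 1
  rw [Complex.exp_mul_I]
  push_cast
  simp [Complex.cos_pi_div_two, Complex.sin_pi_div_two]

theorem rs_at_roots_of_unity (n : ℕ) (hn : 2 ≤ n) (N : ℕ) (hN : N = 2 ^ n)
    (z : ℤ → ℂ) (hz : ∀ j : ℤ, z j = Complex.exp (2 * Real.pi * Complex.I * j / N)) :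
    (∀ j : ℤ, Even j → P n (z j) = 2 * P (n - 2) (z j)) ∧
    (∀ j u : ℤ, j = 2 * u + 1 →
      P n (z j) = (-1 : ℂ) ^ u * (2 * Complex.I) * Q (n - 2) (z j)) := by
  obtain ⟨m, rfl⟩ : ∃ m, n = m + 2 := ⟨n - 2, by omega⟩
  subst hN
  have hkey : ∀ j : ℤ, z j ^ (2 ^ m : ℕ) = Complex.I ^ j := by
    intro j; rw [hz j]; exact key m j
  have hkey2 : ∀ j : ℤ, z j ^ (2 ^ (m + 1) : ℕ) = (-1 : ℂ) ^ j := by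
    intro j
    have : (2 : ℕ) ^ (m + 1) = 2 ^ m * 2 := by ring
    have sq : (Complex.I ^ j) ^ (2 : ℕ) = (Complex.I ^ (2 : ℕ)) ^ j := by
      rw [← zpow_natCast (Complex.I ^ j), ← zpow_mul, mul_comm, zpow_mul, zpow_natCast]
    rw [this, pow_mul, hkey j, sq]
    norm_num
  constructor
  · rintro j ⟨k, rfl⟩
    have h1 : (-1 : ℂ) ^ (k + k) = 1 := by
      rw [← two_mul, zpow_mul]; norm_num
    simp only [P, Q, RS, Nat.add_sub_cancel]
    rw [hkey2, h1]
    ring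
  · rintro j u rfl
    have h1 : (-1 : ℂ) ^ (2 * u + 1) = -1 := by
      rw [zpow_add₀ (by norm_num : (-1:ℂ) ≠ 0), zpow_mul]; norm_num
    have h2 : Complex.I ^ (2 * u + 1) = (-1 : ℂ) ^ u * Complex.I := by
      have sq : (Complex.I ^ u) ^ (2 : ℤ) = (Complex.I ^ (2 : ℤ)) ^ u := by
        rw [← zpow_mul, mul_comm, zpow_mul]
      rw [zpow_add₀ Complex.I_ne_zero, mul_comm 2 u, zpow_mul, sq]
      norm_num
    simp only [P, Q, RS, Nat.add_sub_cancel]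
    rw [hkey2, hkey, h1, h2]
    ring
end

section
/- Let γ := sin^2(π/8), k ∈ ℕ, M > 0. Suppose S is a real trigonometric polynomial of degree at most k satisfying 0 ≤ S(t) ≤ M for all t ∈ ℝ, and suppose a ∈ ℝ satisfies S(a) ≥ (1 - γ)M. Then S(t) ≥ γM for all t ∈ [a - π/(2k), a + π/(2k)]. -/
open Real

/-- A real trigonometric polynomial of degree at most `k`. -/
def IsTrigPoly (k : ℕ) (S : ℝ → ℝ) : Prop :=
  ∃ a b : ℕ → ℝ, ∀ t : ℝ,
    S t = a 0 + ∑ j ∈ Finset.Icc 1 k, (a j * Real.cos (j * t) + b j * Real.sin (j * t))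

lemma IsTrigPoly.sub {k : ℕ} {S T : ℝ → ℝ} (hS : IsTrigPoly k S) (hT : IsTrigPoly k T) :
    IsTrigPoly k (fun t => S t - T t) := by
  obtain ⟨a, b, hS⟩ := hS
  obtain ⟨c, d, hT⟩ := hT
  refine ⟨fun j => a j - c j, fun j => b j - d j, fun t => ?_⟩
  dsimp only
  rw [hS, hT]
  rw [Finset.sum_congr rfl (fun j _ => by ring :
    ∀ j ∈ Finset.Icc 1 k, (a j - c j) * Real.cos (j * t) + (b j - d j) * Real.sin (j * t)
      = (a j * Real.cos (j * t) + b j * Real.sin (j * t))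
        - (c j * Real.cos (j * t) + d j * Real.sin (j * t))), Finset.sum_sub_distrib]
  ring

lemma isTrigPoly_const (k : ℕ) (c : ℝ) : IsTrigPoly k (fun _ => c) := by
  refine ⟨fun j => if j = 0 then c else 0, fun _ => 0, fun t => ?_⟩
  dsimp only
  rw [if_pos rfl, Finset.sum_eq_zero, add_zero]
  intro j hj
  simp only [Finset.mem_Icc] at hj
  have : j ≠ 0 := by omega
  simp [this]

lemma isTrigPoly_cos {k : ℕ} (hk : k ≠ 0) (β c : ℝ) :
    IsTrigPoly k (fun t => β * Real.cos (k * t + c)) := by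
  refine ⟨fun j => if j = k then β * Real.cos c else 0,
    fun j => if j = k then -(β * Real.sin c) else 0, fun t => ?_⟩
  dsimp only
  rw [Finset.sum_eq_single_of_mem k (by simp [Finset.mem_Icc]; omega)]
  · have h0 : (0 : ℕ) ≠ k := fun h => hk h.symm
    rw [if_pos rfl, if_pos rfl, if_neg h0, Real.cos_add]
    ring
  · intro j _ hj
    simp [if_neg hj]

lemma IsTrigPoly.continuous {k : ℕ} {S : ℝ → ℝ} (hS : IsTrigPoly k S) : Continuous S := by
  obtain ⟨a, b, h⟩ := hS
  have : S = fun t => a 0 + ∑ j ∈ Finset.Icc 1 k,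
      (a j * Real.cos (j * t) + b j * Real.sin (j * t)) := funext h
  rw [this]
  fun_prop



lemma trigPoly_rep {k : ℕ} {S : ℝ → ℝ} (hS : IsTrigPoly k S) :
    ∃ P : Polynomial ℂ, P.natDegree ≤ 2 * k ∧
      ∀ t : ℝ, P.eval (Complex.exp (t * Complex.I)) =
        Complex.exp ((k : ℂ) * (t * Complex.I)) * (S t : ℂ) := by
  obtain ⟨A, B, h⟩ := hS
  refine ⟨Polynomial.C ((A 0 : ℝ) : ℂ) * Polynomial.X ^ k +
    ∑ j ∈ Finset.Icc 1 k,
      (Polynomial.C (((A j : ℝ) : ℂ)/2 - ((B j : ℝ) : ℂ)*Complex.I/2) * Polynomial.X ^ (k + j) +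
       Polynomial.C (((A j : ℝ) : ℂ)/2 + ((B j : ℝ) : ℂ)*Complex.I/2) * Polynomial.X ^ (k - j)),
    ?_, ?_⟩
  · apply le_trans (Polynomial.natDegree_add_le _ _)
    apply max_le
    · exact le_trans (Polynomial.natDegree_C_mul_X_pow_le _ _) (by omega)
    · apply Polynomial.natDegree_sum_le_of_forall_le
      intro j hj
      simp only [Finset.mem_Icc] at hj
      apply le_trans (Polynomial.natDegree_add_le _ _)
      apply max_le
      · exact le_trans (Polynomial.natDegree_C_mul_X_pow_le _ _) (by omega)
      · exact le_trans (Polynomial.natDegree_C_mul_X_pow_le _ _) (by omega)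
  · intro t
    rw [h t]
    simp only [Polynomial.eval_add, Polynomial.eval_mul, Polynomial.eval_pow,
      Polynomial.eval_C, Polynomial.eval_X, Polynomial.eval_finset_sum]
    push_cast
    rw [mul_add, Finset.mul_sum]
    congr 1
    · rw [← Complex.exp_nat_mul]
      ring
    · apply Finset.sum_congr rfl
      intro j hj
      simp only [Finset.mem_Icc] at hj
      have e1 : Complex.exp (t * Complex.I) ^ (k + j)
          = Complex.exp ((k : ℂ) * (t * Complex.I)) * Complex.exp ((((j : ℝ) * t : ℝ) : ℂ) * Complex.I) := by
        rw [← Complex.exp_nat_mul, ← Complex.exp_add]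
        push_cast
        ring_nf
      have e2 : Complex.exp (t * Complex.I) ^ (k - j)
          = Complex.exp ((k : ℂ) * (t * Complex.I)) * Complex.exp (((-((j : ℝ) * t) : ℝ) : ℂ) * Complex.I) := by
        rw [← Complex.exp_nat_mul, ← Complex.exp_add]
        congr 1
        push_cast [Nat.cast_sub hj.2]
        ring
      rw [e1, e2, Complex.exp_mul_I, Complex.exp_mul_I]
      push_cast
      rw [Complex.cos_neg, Complex.sin_neg]
      set E := Complex.exp ((k : ℂ) * (t * Complex.I))
      set c := Complex.cos ((j : ℂ) * t)
      set sn := Complex.sin ((j : ℂ) * t)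
      linear_combination (-(B j : ℂ) * sn * E) * Complex.I_sq
lemma IsTrigPoly.add {k : ℕ} {S T : ℝ → ℝ} (hS : IsTrigPoly k S) (hT : IsTrigPoly k T) :
    IsTrigPoly k (fun t => S t + T t) := by
  obtain ⟨a, b, hS⟩ := hS
  obtain ⟨c, d, hT⟩ := hT
  refine ⟨fun j => a j + c j, fun j => b j + d j, fun t => ?_⟩
  dsimp only
  rw [hS, hT]
  conv_rhs => rw [Finset.sum_congr rfl (fun j _ => by ring :
    ∀ j ∈ Finset.Icc 1 k, (a j + c j) * Real.cos (j * t) + (b j + d j) * Real.sin (j * t)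
      = (a j * Real.cos (j * t) + b j * Real.sin (j * t))
        + (c j * Real.cos (j * t) + d j * Real.sin (j * t))), Finset.sum_add_distrib]
  ring

set_option maxHeartbeats 2000000 in
lemma key_s6 {k : ℕ} (hk : k ≠ 0) {M : ℝ} (hM : 0 < M) {S : ℝ → ℝ} (hS : IsTrigPoly k S)
    (hbound : ∀ t, 0 ≤ S t ∧ S t ≤ M) {a : ℝ}
    (ha : S a ≥ (1 - Real.sin (π/8)^2) * M) {t₀ : ℝ} (h1 : a < t₀)
    (h2 : t₀ ≤ a + π/(2*k)) : Real.sin (π/8)^2 * M ≤ S t₀ := by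
  by_contra hcon
  push_neg at hcon
  have hkR : (0:ℝ) < (k:ℝ) := by exact_mod_cast Nat.pos_of_ne_zero hk
  have hπ := Real.pi_pos
  set γ : ℝ := Real.sin (π/8)^2 with hγdef
  have hγ : γ = 1/2 - Real.cos (π/4)/2 := by
    rw [hγdef, Real.sin_sq_eq_half_sub, show 2*(π/8) = π/4 by ring]
  set θ : ℝ := a - π/(4*k) with hθdef
  set ε : ℝ := (γ*M - S t₀)/2 with hεdef
  have hε : 0 < ε := by rw [hεdef]; linarith
  set c₁ : ℝ := -((k:ℝ)*θ) with hc₁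
  set c₂ : ℝ := 3*π/8 - (k:ℝ)*θ with hc₂
  set D : ℝ → ℝ := fun t => S t - ((M/2 + (M/2) * Real.cos ((k:ℝ)*t + c₁))
      + ε * Real.cos ((k:ℝ)*t + c₂)) with hDdef
  clear_value γ θ ε c₁ c₂ D
  have hD : IsTrigPoly k D := by
    rw [hDdef]
    exact hS.sub (IsTrigPoly.add (IsTrigPoly.add (isTrigPoly_const k (M/2))
      (isTrigPoly_cos hk (M/2) c₁)) (isTrigPoly_cos hk ε c₂))
  have hcont : Continuous D := by
    rw [hDdef]
    apply hS.continuous.sub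
    fun_prop
  have hDt : ∀ t, D t = S t - M/2 - (M/2)*Real.cos ((k:ℝ)*t + c₁)
      - ε*Real.cos (((k:ℝ)*t + c₁) + 3*π/8) := by
    intro t
    rw [hDdef]
    dsimp only
    rw [show (k:ℝ)*t + c₂ = ((k:ℝ)*t + c₁) + 3*π/8 by rw [hc₁, hc₂]; ring]
    ring
  have hc38 : 0 < Real.cos (3*π/8) := by
    apply Real.cos_pos_of_mem_Ioo
    constructor <;> nlinarith
  have hc58 : Real.cos (5*π/8) < 0 := by
    apply Real.cos_neg_of_pi_div_two_lt_of_lt <;> nlinarith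
  have hcos_npi : ∀ (n : ℕ) (x : ℝ), Real.cos (n*π + x) = (-1)^n * Real.cos x := by
    intro n x
    rw [show (n:ℝ)*π + x = n*π - (-x) by ring, Real.cos_nat_mul_pi_sub, Real.cos_neg]
  -- the sample points
  set p : ℕ → ℝ := fun j => if j = 0 then θ - π/k else if j = 1 then θ
      else if j = 2 then a else if j = 3 then t₀ else θ + ((j - 3 : ℕ) : ℝ)*(π/k) with hpdef
  clear_value p
  have hp0 : p 0 = θ - π/k := by rw [hpdef]; norm_num
  have hp1 : p 1 = θ := by rw [hpdef]; norm_num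
  have hp2 : p 2 = a := by rw [hpdef]; norm_num
  have hp3 : p 3 = t₀ := by rw [hpdef]; norm_num
  have hp4 : ∀ m : ℕ, p (m+4) = θ + ((m:ℝ)+1)*(π/k) := by
    intro m
    rw [hpdef]
    dsimp only
    rw [if_neg (by omega), if_neg (by omega), if_neg (by omega), if_neg (by omega)]
    congr 1
    rw [show m+4-3 = m+1 by omega]
    push_cast
    ring
  have ha_eq : a = θ + (π/k)/4 := by rw [hθdef]; field_simp; ring
  have h2' : t₀ ≤ θ + 3*((π/k)/4) := by
    rw [hθdef]
    have : π/(2*(k:ℝ)) = 2*(π/(k:ℝ)/4) := by field_simp; ring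
    rw [this] at h2
    linarith [h2]
  have hπk : 0 < π/(k:ℝ) := by positivity
  -- monotonicity
  have hlt : ∀ j, p j < p (j+1) := by
    intro j
    rcases j with _|_|_|_|m
    · rw [hp0, hp1]; linarith
    · rw [hp1, hp2, ha_eq]; linarith
    · rw [hp2, hp3]; exact h1
    · rw [hp3, show (3:ℕ)+1 = 0+4 by rfl, hp4 0]; push_cast; linarith
    · rw [show m+4+1 = (m+1)+4 by omega, hp4, hp4]
      push_cast
      have := hπk
      nlinarith
  have hple : ∀ i j : ℕ, i ≤ j → p i ≤ p j := by
    intro i j hij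
    induction j with
    | zero => rw [Nat.le_zero.mp hij]
    | succ n ih =>
      rcases Nat.lt_or_ge i (n+1) with h | h
      · exact le_trans (ih (by omega)) (hlt n).le
      · rw [show i = n+1 by omega]
  -- arguments of the cosines
  have hkarg : ∀ t : ℝ, (k:ℝ)*t + c₁ = (k:ℝ)*(t - θ) := by
    intro t; rw [hc₁]; ring
  have hkπk : (k:ℝ)*(π/k) = π := by field_simp
  -- signs
  have hSb := hbound
  have hDP : ∀ j, (Even j → 0 < D (p j)) ∧ (Odd j → D (p j) < 0) := by
    intro j
    have hkey_min : ∀ t, (k:ℝ)*t + c₁ = -π ∨ (∃ n : ℕ, Odd n ∧ (k:ℝ)*t + c₁ = n*π) →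
        0 < D t := by
      intro t ht
      have hcos1 : Real.cos ((k:ℝ)*t + c₁) = -1 ∧
          Real.cos (((k:ℝ)*t + c₁) + 3*π/8) < 0 := by
        rcases ht with h | ⟨n, hn, h⟩
        · rw [h]
          constructor
          · rw [Real.cos_neg, Real.cos_pi]
          · rw [show -π + 3*π/8 = -(5*π/8) by ring, Real.cos_neg]
            linarith
        · rw [h]
          constructor
          · rw [show (n:ℝ)*π = n*π + 0 by ring, hcos_npi n 0, Real.cos_zero, hn.neg_one_pow]
            ring
          · rw [hcos_npi n (3*π/8), hn.neg_one_pow]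
            linarith
      rw [hDt t, hcos1.1]
      have := (hbound t).1
      have hprod := mul_pos hε (neg_pos.2 hcos1.2)
      linarith
    have hkey_max : ∀ t, (∃ n : ℕ, Even n ∧ (k:ℝ)*t + c₁ = n*π) → D t < 0 := by
      intro t ⟨n, hn, h⟩
      rw [hDt t, h, hcos_npi n (3*π/8), show (n:ℝ)*π = n*π + 0 by ring, hcos_npi n 0,
        Real.cos_zero, hn.neg_one_pow]
      have := (hbound t).2
      nlinarith
    rcases j with _|_|_|_|m
    · -- j = 0 : minimum, positive
      refine ⟨fun _ => ?_, fun h => absurd h (by simp)⟩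
      apply hkey_min
      left
      rw [hp0, hkarg]
      rw [show θ - π/(k:ℝ) - θ = -(π/k) by ring]
      rw [mul_neg, hkπk]
    · -- j = 1 : maximum, negative
      refine ⟨fun h => absurd h (by simp), fun _ => ?_⟩
      apply hkey_max
      exact ⟨0, Even.zero, by rw [hp1, hkarg]; simp⟩
    · -- j = 2 : the point a, positive
      refine ⟨fun _ => ?_, fun h => absurd h (by simp [Nat.odd_iff])⟩
      rw [hp2, hDt, hkarg, show a - θ = (π/k)/4 by rw [ha_eq]; ring,
        show (k:ℝ)*((π/k)/4) = π/4 by field_simp,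
        show π/4 + 3*π/8 = 5*π/8 by ring]
      have ha' : S a ≥ M/2 + (M/2)*Real.cos (π/4) := by
        have : (1-γ)*M = M/2 + (M/2)*Real.cos (π/4) := by rw [hγ]; ring
        linarith [ha, this.ge]
      nlinarith [mul_pos hε (neg_pos.2 hc58)]
    · -- j = 3 : the point t₀, negative
      refine ⟨fun h => absurd h (by simp [Nat.even_iff]), fun _ => ?_⟩
      rw [hp3, hDt]
      set u : ℝ := (k:ℝ)*t₀ + c₁ with hu
      have hu1 : π/4 < u := by
        rw [hu, hkarg, show t₀ - θ = (t₀ - a) + (π/k)/4 by rw [ha_eq]; ring, mul_add,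
          show (k:ℝ)*((π/k)/4) = π/4 by field_simp]
        nlinarith [mul_pos hkR (sub_pos.2 h1)]
      have hu2 : u ≤ 3*π/4 := by
        rw [hu, hkarg]
        have : (k:ℝ)*(t₀ - θ) ≤ (k:ℝ)*(3*((π/k)/4)) := by
          apply mul_le_mul_of_nonneg_left _ hkR.le
          linarith [h2']
        calc (k:ℝ)*(t₀-θ) ≤ (k:ℝ)*(3*((π/k)/4)) := this
          _ = 3*π/4 := by field_simp
      have hcosu : Real.cos (3*π/4) ≤ Real.cos u :=
        Real.cos_le_cos_of_nonneg_of_le_pi (by linarith) (by linarith) hu2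
      have hc34 : Real.cos (3*π/4) = -Real.cos (π/4) := by
        rw [show 3*π/4 = π - π/4 by ring, Real.cos_pi_sub]
      have h5 : (M/2)*Real.cos u ≥ (M/2)*(-Real.cos (π/4)) := by
        apply mul_le_mul_of_nonneg_left _ (by linarith : (0:ℝ) ≤ M/2)
        rw [← hc34]; exact hcosu
      have h6 : ε * Real.cos (u + 3*π/8) ≥ ε * (-1) :=
        mul_le_mul_of_nonneg_left (Real.neg_one_le_cos _) hε.le
      have hSt₀ : S t₀ = γ*M - 2*ε := by rw [hεdef]; ring
      have hγM : γ*M = M/2 - (M/2)*Real.cos (π/4) := by rw [hγ]; ring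
      linarith
    · -- j = m+4
      have harg : (k:ℝ)*(p (m+4)) + c₁ = ((m+1 : ℕ) : ℝ)*π := by
        rw [hp4 m, hkarg, show θ + ((m:ℝ)+1)*(π/k) - θ = ((m:ℝ)+1)*(π/k) by ring]
        push_cast
        field_simp
        try ring
      rcases Nat.even_or_odd m with hm | hm
      · -- m even → j = m+4 even → minimum → positive
        refine ⟨fun _ => ?_, fun h => absurd h (by simp [Nat.odd_iff, Nat.even_iff] at hm ⊢; omega)⟩
        exact hkey_min _ (Or.inr ⟨m+1, hm.add_one, harg⟩)
      · -- m odd → maximum → negative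
        refine ⟨fun h => absurd h (by simp [Nat.odd_iff, Nat.even_iff] at hm ⊢; omega), fun _ => ?_⟩
        exact hkey_max _ ⟨m+1, hm.add_one, harg⟩
  -- period fact
  have hper : p (2*k+2) = p 0 + 2*π := by
    rw [show 2*k+2 = (2*k-2)+4 by omega, hp4, hp0]
    have hcast : ((2*k-2 : ℕ) : ℝ) = 2*(k:ℝ) - 2 := by
      push_cast [Nat.cast_sub (by omega : 2 ≤ 2*k)]
      ring
    rw [hcast]
    field_simp
    ring
  -- zeros via IVT
  have hzero : ∀ j : Fin (2*k+2), ∃ x, x ∈ Set.Ioo (p j.1) (p (j.1+1)) ∧ D x = 0 := by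
    intro j
    have hle : p j.1 ≤ p (j.1+1) := (hlt j.1).le
    rcases Nat.even_or_odd j.1 with he | ho
    · have hA : 0 < D (p j.1) := (hDP _).1 he
      have hB : D (p (j.1+1)) < 0 := (hDP _).2 he.add_one
      obtain ⟨x, hx, hDx⟩ := intermediate_value_Ioo' hle hcont.continuousOn ⟨hB, hA⟩
      exact ⟨x, hx, hDx⟩
    · have hA : D (p j.1) < 0 := (hDP _).2 ho
      have hB : 0 < D (p (j.1+1)) := (hDP _).1 ho.add_one
      obtain ⟨x, hx, hDx⟩ := intermediate_value_Ioo hle hcont.continuousOn ⟨hA, hB⟩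
      exact ⟨x, hx, hDx⟩
  choose z hz1 hz2 using hzero
  have hzmono : ∀ i j : Fin (2*k+2), i < j → z i < z j := by
    intro i j hij
    have h1' := (hz1 i).2
    have h2' := (hz1 j).1
    have h3' : p ((i:ℕ)+1) ≤ p (j:ℕ) := hple _ _ (by exact_mod_cast hij)
    linarith
  have hzlo : ∀ j : Fin (2*k+2), p 0 < z j := fun j =>
    lt_of_le_of_lt (hple 0 j.1 (by omega)) (hz1 j).1
  have hzhi : ∀ j : Fin (2*k+2), z j < p 0 + 2*π := fun j =>
    lt_of_lt_of_le (hz1 j).2 (by rw [← hper]; exact hple _ _ (by omega))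
  obtain ⟨P, hdeg, hP⟩ := trigPoly_rep hD
  have hroot : ∀ j : Fin (2*k+2), P.eval (Complex.exp ((z j : ℂ) * Complex.I)) = 0 := by
    intro j
    rw [hP (z j), hz2 j]
    simp
  by_cases hP0 : P = 0
  · have hDt₀ : D t₀ < 0 := by
      have := (hDP 3).2 ⟨1, by omega⟩
      rwa [hp3] at this
    have hev := hP t₀
    rw [hP0] at hev
    simp only [Polynomial.eval_zero] at hev
    have : (D t₀ : ℂ) = 0 := by
      rcases mul_eq_zero.mp hev.symm with h | h
      · exact absurd h (Complex.exp_ne_zero _)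
      · exact h
    have : D t₀ = 0 := by exact_mod_cast this
    linarith
  · have hinj : Function.Injective
        (fun j : Fin (2*k+2) => Complex.exp ((z j : ℂ) * Complex.I)) := by
      have habs : ∀ i j : Fin (2*k+2),
          Complex.exp ((z i : ℂ) * Complex.I) = Complex.exp ((z j : ℂ) * Complex.I) →
          z i = z j := by
        intro i j hij
        rw [Complex.exp_eq_exp_iff_exists_int] at hij
        obtain ⟨n, hn⟩ := hij
        have hn' : ((z i : ℝ) : ℂ) * Complex.I = (((z j : ℝ) : ℂ) + (n:ℂ)*(2*(π:ℂ))) * Complex.I := by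
          rw [hn]; ring
        have hC : ((z i : ℝ) : ℂ) = ((z j + (n:ℝ)*(2*π) : ℝ) : ℂ) := by
          push_cast
          exact mul_right_cancel₀ Complex.I_ne_zero hn'
        have hzr : z i = z j + (n:ℝ)*(2*π) := by exact_mod_cast hC
        have hb1 := hzlo i; have hb2 := hzhi i
        have hb3 := hzlo j; have hb4 := hzhi j
        have hn0 : n = 0 := by
          rcases lt_trichotomy n 0 with h | h | h
          · have : (n:ℝ) ≤ -1 := by exact_mod_cast Int.le_sub_one_of_lt h
            nlinarith
          · exact h
          · have : (1:ℝ) ≤ (n:ℝ) := by exact_mod_cast h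
            nlinarith
        rw [hn0] at hzr
        simpa using hzr
      intro i j hij
      have hz' := habs i j hij
      rcases lt_trichotomy i j with h | h | h
      · exact absurd hz' (ne_of_lt (hzmono i j h))
      · exact h
      · exact absurd hz'.symm (ne_of_lt (hzmono j i h))
    have hcard : (Finset.image (fun j : Fin (2*k+2) =>
        Complex.exp ((z j : ℂ) * Complex.I)) Finset.univ).card = 2*k+2 := by
      rw [Finset.card_image_of_injective _ hinj, Finset.card_univ, Fintype.card_fin]
    have hsub : (Finset.image (fun j : Fin (2*k+2) =>
        Complex.exp ((z j : ℂ) * Complex.I)) Finset.univ) ⊆ P.roots.toFinset := by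
      intro x hx
      simp only [Finset.mem_image, Finset.mem_univ, true_and] at hx
      obtain ⟨j, rfl⟩ := hx
      rw [Multiset.mem_toFinset, Polynomial.mem_roots hP0]
      exact hroot j
    have hc1 := Finset.card_le_card hsub
    have hc2 := Multiset.toFinset_card_le P.roots
    have hc3 := P.card_roots'
    omega

lemma IsTrigPoly.reflect {k : ℕ} {S : ℝ → ℝ} (hS : IsTrigPoly k S) (a : ℝ) :
    IsTrigPoly k (fun t => S (2*a - t)) := by
  obtain ⟨A, B, h⟩ := hS
  refine ⟨fun j => A j * Real.cos (2*j*a) + B j * Real.sin (2*j*a),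
          fun j => A j * Real.sin (2*j*a) - B j * Real.cos (2*j*a), fun t => ?_⟩
  dsimp only
  rw [h (2*a - t)]
  congr 1
  · simp
  · apply Finset.sum_congr rfl
    intro j _
    rw [show (j:ℝ)*(2*a - t) = 2*j*a - j*t by ring, Real.cos_sub, Real.sin_sub]
    ring

theorem trig_lower_bound (k : ℕ) (M : ℝ) (hM : 0 < M) (S : ℝ → ℝ)
    (hS : IsTrigPoly k S) (hbound : ∀ t, 0 ≤ S t ∧ S t ≤ M) (a : ℝ)
    (ha : S a ≥ (1 - Real.sin (Real.pi / 8) ^ 2) * M) :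
    ∀ t ∈ Set.Icc (a - Real.pi / (2 * k)) (a + Real.pi / (2 * k)),
      S t ≥ Real.sin (Real.pi / 8) ^ 2 * M := by
  intro t ht
  obtain ⟨ht1, ht2⟩ := ht
  have hγhalf : Real.sin (Real.pi/8)^2 ≤ 1/2 := by
    have h := Real.sin_sq_eq_half_sub (π/8)
    rw [show 2*(π/8) = π/4 by ring] at h
    have : 0 ≤ Real.cos (π/4) := by rw [Real.cos_pi_div_four]; positivity
    linarith
  rcases Nat.eq_zero_or_pos k with hk0 | hkpos
  · subst hk0
    norm_num at ht1 ht2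
    have hta : t = a := le_antisymm ht2 ht1
    rw [hta]
    nlinarith [ha, hM, hγhalf]
  · have hk : k ≠ 0 := hkpos.ne'
    rcases lt_trichotomy t a with h | h | h
    · have hrefl := hS.reflect a
      have hb' : ∀ s, 0 ≤ (fun s => S (2*a - s)) s ∧ (fun s => S (2*a - s)) s ≤ M :=
        fun s => hbound _
      have ha' : (fun s => S (2*a - s)) a ≥ (1 - Real.sin (π/8)^2) * M := by
        dsimp only
        rw [show 2*a - a = a by ring]
        exact ha
      have hkey := key_s6 hk hM hrefl hb' ha' (t₀ := 2*a - t) (by linarith) (by linarith)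
      rw [show 2*a - (2*a - t) = t by ring] at hkey
      exact hkey
    · rw [h]
      nlinarith [ha, hM, hγhalf]
    · exact key_s6 hk hM hS hbound ha h ht2
end

section
/- Let n ≥ 2, N := 2^n, γ := sin^2(π/8), and z_j := e^{2πij/N} for j ∈ ℤ. Then for every even integer j and every r ∈ {-1, 1}, max{|P_n(z_j)|^2, |P_n(z_{j+r})|^2} ≥ γ · 2^{n+1} = 2γN, where P_n is the n-th Rudin-Shapiro polynomial. -/
open Complex Real ComplexConjugate

lemma P_zero (z : ℂ) : P 0 z = 1 := rfl
lemma Q_zero (z : ℂ) : Q 0 z = 1 := rfl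
lemma P_succ (k : ℕ) (z : ℂ) : P (k+1) z = P k z + z ^ (2^k) * Q k z := rfl
lemma Q_succ (k : ℕ) (z : ℂ) : Q (k+1) z = P k z - z ^ (2^k) * Q k z := rfl

/-- Energy identity on the unit circle. -/
lemma rs_energy (z : ℂ) (hz : Complex.normSq z = 1) (k : ℕ) :
    Complex.normSq (P k z) + Complex.normSq (Q k z) = 2^(k+1) := by
  induction k with
  | zero => norm_num [P_zero, Q_zero]
  | succ k ih =>
      have hc : Complex.normSq (z ^ 2^k * Q k z) = Complex.normSq (Q k z) := by
        rw [Complex.normSq_mul, map_pow, hz, one_pow, one_mul]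
      rw [P_succ, Q_succ, Complex.normSq_add, Complex.normSq_sub, hc, pow_succ]
      linarith [ih]

noncomputable def er (A B : ℂ) : ℝ := (Complex.normSq A - Complex.normSq B)/2

noncomputable def cip (A B C D : ℂ) : ℝ :=
  er A B * er C D + (conj (conj A * B) * (conj C * D)).re

lemma er_norm (z : ℂ) (hz : Complex.normSq z = 1) (k : ℕ) :
    er (P k z) (Q k z)^2 + Complex.normSq (conj (P k z) * Q k z) = ((2:ℝ)^k)^2 := by
  have h := rs_energy z hz k
  rw [pow_succ] at h
  rw [er, Complex.normSq_mul, Complex.normSq_conj]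
  linear_combination ((Complex.normSq (P k z) + Complex.normSq (Q k z) + 2^k*2)/4) * h

/-- The key step identity. -/
lemma step_id (A B C D c d : ℂ) (hc : Complex.normSq c = 1) (hd : Complex.normSq d = 1) :
    cip (A + c*B) (A - c*B) (C + d*D) (C - d*D)
      = 4 * (er A B * er C D + ((conj c * d) * (A * conj B) * (conj C * D)).re) := by
  have hc0 : c ≠ 0 := by
    intro h; rw [h] at hc; simp at hc
  have hd0 : d ≠ 0 := by
    intro h; rw [h] at hd; simp at hd
  have hcc : conj c = c⁻¹ := by
    have h1 : conj c * c = 1 := by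
      rw [mul_comm, Complex.mul_conj, hc, Complex.ofReal_one]
    exact eq_inv_of_mul_eq_one_left h1
  have hdd : conj d = d⁻¹ := by
    have h1 : conj d * d = 1 := by
      rw [mul_comm, Complex.mul_conj, hd, Complex.ofReal_one]
    exact eq_inv_of_mul_eq_one_left h1
  have hre : ∀ w : ℂ, ((w.re : ℝ) : ℂ) = (w + conj w)/2 := by
    intro w; rw [Complex.add_conj]; push_cast; ring
  apply Complex.ofReal_injective
  unfold cip er
  push_cast
  simp only [hre]
  simp only [← Complex.mul_conj]
  simp only [map_add, map_sub, map_mul, Complex.conj_conj]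
  simp only [hcc, hdd]
  field_simp
  ring

/-- Cauchy-Schwarz in ℝ³. -/
lemma rvcs (f g a b c d : ℝ) :
    |f*g + (a*c + b*d)| ≤ Real.sqrt ((f^2+a^2+b^2)*(g^2+c^2+d^2)) := by
  apply Real.abs_le_sqrt
  nlinarith [sq_nonneg (f*c - g*a), sq_nonneg (f*d - g*b), sq_nonneg (a*d - b*c)]

/-- Cauchy-Schwarz in ℝ². -/
lemma rvcs2 (a b c d : ℝ) : a*c + b*d ≤ Real.sqrt ((a^2+b^2)*(c^2+d^2)) := by
  calc a*c+b*d ≤ |a*c+b*d| := le_abs_self _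
  _ ≤ _ := Real.abs_le_sqrt (by nlinarith [sq_nonneg (a*d - b*c)])

/-- The projection (spherical triangle) inequality in ℝ³. -/
lemma rproj (R e1 e2 e3 a1 b1 a2 b2 a3 b3 p q t : ℝ) (hR : 0 < R)
    (h1 : e1^2 + a1^2 + b1^2 = R^2) (h2 : e2^2 + a2^2 + b2^2 = R^2)
    (h3 : e3^2 + a3^2 + b3^2 = R^2)
    (hp : p = e1*e2 + (a1*a2 + b1*b2)) (hq : q = e2*e3 + (a2*a3 + b2*b3))
    (ht : t = e1*e3 + (a1*a3 + b1*b3)) :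
    p*q - Real.sqrt ((R^2*R^2 - p^2) * (R^2*R^2 - q^2)) ≤ R^2 * t := by
  have c1 : (R^2*e1 - p*e2)^2 + (R^2*a1 - p*a2)^2 + (R^2*b1 - p*b2)^2
      = R^2*(R^2*R^2 - p^2) := by
    linear_combination (R^2*R^2)*h1 + p^2*h2 + (2*R^2*p)*hp
  have c3 : (R^2*e3 - q*e2)^2 + (R^2*a3 - q*a2)^2 + (R^2*b3 - q*b2)^2
      = R^2*(R^2*R^2 - q^2) := by
    linear_combination (R^2*R^2)*h3 + q^2*h2 + (2*R^2*q)*hq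
  have c2 : (R^2*e1 - p*e2)*(R^2*e3 - q*e2)
      + ((R^2*a1 - p*a2)*(R^2*a3 - q*a2) + (R^2*b1 - p*b2)*(R^2*b3 - q*b2))
      = R^2*R^2*t - R^2*(p*q) := by
    linear_combination (-(R^2*R^2))*ht + (R^2*q)*hp + (R^2*p)*hq + (p*q)*h2
  have hv := rvcs (R^2*e1 - p*e2) (R^2*e3 - q*e2) (R^2*a1 - p*a2) (R^2*b1 - p*b2)
      (R^2*a3 - q*a2) (R^2*b3 - q*b2)
  rw [c1, c3, c2] at hv
  have hsq : (R^2*(R^2*R^2-p^2))*(R^2*(R^2*R^2-q^2))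
      = (R^2)^2*((R^2*R^2-p^2)*(R^2*R^2-q^2)) := by ring
  rw [hsq, Real.sqrt_mul (sq_nonneg _), Real.sqrt_sq (sq_nonneg R)] at hv
  have hlow := (abs_le.mp hv).1
  nlinarith [pow_pos hR 2, hlow, Real.sqrt_nonneg ((R^2*R^2-p^2)*(R^2*R^2-q^2))]

lemma crin (X Y : ℂ) : (conj X * Y).re = X.re*Y.re + X.im*Y.im := by
  simp [Complex.mul_re]

lemma cns (X : ℂ) : Complex.normSq X = X.re^2 + X.im^2 := by
  rw [Complex.normSq_apply]; ring


set_option maxHeartbeats 1000000 in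
lemma abstract_step (R σ τ E1 E2 : ℝ) (X1 X2 w : ℂ)
    (hRpos : 0 < R)
    (h1 : E1^2 + Complex.normSq X1 = R^2) (h2 : E2^2 + Complex.normSq X2 = R^2)
    (hnw : Complex.normSq w = 1)
    (hwre : w.re = Real.cos τ)
    (hp : R^2 * Real.cos σ ≤ E1*E2 + (conj X1 * X2).re)
    (hσ1 : 0 ≤ σ) (hσ2 : σ ≤ π/2) (hτ1 : 0 ≤ τ) (hτ2 : τ ≤ π/2) :
    R^2 * Real.cos (σ+τ) ≤ E1*E2 + (conj X1 * (w * X2)).re := by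
  have hR2 : (0:ℝ) < R^2 := by positivity
  have e1 : E1^2 + X1.re^2 + X1.im^2 = R^2 := by rw [cns] at h1; linarith
  have e2 : E2^2 + X2.re^2 + X2.im^2 = R^2 := by rw [cns] at h2; linarith
  have h3 : E2^2 + Complex.normSq (w*X2) = R^2 := by
    rw [Complex.normSq_mul, hnw, one_mul]; exact h2
  have e3 : E2^2 + (w*X2).re^2 + (w*X2).im^2 = R^2 := by rw [cns] at h3; linarith
  have key := rproj R E1 E2 E2 X1.re X1.im X2.re X2.im (w*X2).re (w*X2).im
      (E1*E2 + (conj X1 * X2).re) (E2*E2 + (conj X2 * (w*X2)).re)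
      (E1*E2 + (conj X1 * (w*X2)).re)
      hRpos e1 e2 e3 (by rw [crin]) (by rw [crin]) (by rw [crin])
  have hq_eq : (conj X2 * (w * X2)).re = w.re * Complex.normSq X2 := by
    rw [crin, Complex.mul_re, Complex.mul_im, cns]; ring
  have hcσ : 0 ≤ Real.cos σ := Real.cos_nonneg_of_mem_Icc ⟨by linarith, hσ2⟩
  have hcτ : 0 ≤ Real.cos τ := Real.cos_nonneg_of_mem_Icc ⟨by linarith, hτ2⟩
  have hsσ : 0 ≤ Real.sin σ :=
    Real.sin_nonneg_of_nonneg_of_le_pi hσ1 (by linarith [Real.pi_pos])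
  have hsτ : 0 ≤ Real.sin τ :=
    Real.sin_nonneg_of_nonneg_of_le_pi hτ1 (by linarith [Real.pi_pos])
  have hq : R^2 * Real.cos τ ≤ E2*E2 + (conj X2 * (w*X2)).re := by
    rw [hq_eq, hwre]
    nlinarith [mul_nonneg (sub_nonneg.mpr (Real.cos_le_one τ)) (sq_nonneg E2),
      Complex.normSq_nonneg X2]
  have hp0 : 0 ≤ E1*E2 + (conj X1 * X2).re := le_trans (mul_nonneg hR2.le hcσ) hp
  -- upper bounds via Cauchy-Schwarz
  have hub_p : |E1*E2 + (conj X1 * X2).re| ≤ R^2 := by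
    have hvp := rvcs E1 E2 X1.re X1.im X2.re X2.im
    rw [e1, e2, Real.sqrt_mul_self (sq_nonneg R), ← crin] at hvp
    exact hvp
  have hub_q : |E2*E2 + (conj X2 * (w*X2)).re| ≤ R^2 := by
    have hvq := rvcs E2 E2 X2.re X2.im (w*X2).re (w*X2).im
    rw [e2, e3, Real.sqrt_mul_self (sq_nonneg R), ← crin] at hvq
    exact hvq
  have hA : R^2*R^2 - (E1*E2 + (conj X1 * X2).re)^2 ≤ (R^2*Real.sin σ)^2 := by
    have hsq := mul_self_le_mul_self (mul_nonneg hR2.le hcσ) hp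
    have h2' : R^2*R^2*(Real.sin σ^2 + Real.cos σ^2) = R^2*R^2 := by
      rw [Real.sin_sq_add_cos_sq]; ring
    nlinarith [hsq, h2']
  have hB : R^2*R^2 - (E2*E2 + (conj X2 * (w*X2)).re)^2 ≤ (R^2*Real.sin τ)^2 := by
    have hsq := mul_self_le_mul_self (mul_nonneg hR2.le hcτ) hq
    have h2' : R^2*R^2*(Real.sin τ^2 + Real.cos τ^2) = R^2*R^2 := by
      rw [Real.sin_sq_add_cos_sq]; ring
    nlinarith [hsq, h2']
  have hB0 : 0 ≤ R^2*R^2 - (E2*E2 + (conj X2 * (w*X2)).re)^2 := by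
    have h := abs_le.mp hub_q
    nlinarith [h.1, h.2]
  have hsqrt : Real.sqrt ((R^2*R^2 - (E1*E2 + (conj X1 * X2).re)^2)
      * (R^2*R^2 - (E2*E2 + (conj X2 * (w*X2)).re)^2))
      ≤ (R^2*Real.sin σ)*(R^2*Real.sin τ) := by
    have hmul := mul_le_mul hA hB hB0 (sq_nonneg (R^2*Real.sin σ))
    have h1s := Real.sqrt_le_sqrt hmul
    have h2s : (R^2*Real.sin σ)^2 * (R^2*Real.sin τ)^2
        = ((R^2*Real.sin σ)*(R^2*Real.sin τ))^2 := by ring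
    rw [h2s, Real.sqrt_sq (mul_nonneg (mul_nonneg hR2.le hsσ) (mul_nonneg hR2.le hsτ))] at h1s
    exact h1s
  have hpq : (R^2*Real.cos σ)*(R^2*Real.cos τ)
      ≤ (E1*E2 + (conj X1 * X2).re) * (E2*E2 + (conj X2 * (w*X2)).re) :=
    mul_le_mul hp hq (mul_nonneg hR2.le hcτ) hp0
  have hfinal : R^2*(R^2*Real.cos (σ+τ)) ≤ R^2*(E1*E2 + (conj X1 * (w*X2)).re) := by
    rw [Real.cos_add]
    calc R^2*(R^2*(Real.cos σ*Real.cos τ - Real.sin σ*Real.sin τ))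
        = (R^2*Real.cos σ)*(R^2*Real.cos τ) - (R^2*Real.sin σ)*(R^2*Real.sin τ) := by ring
    _ ≤ (E1*E2 + (conj X1 * X2).re) * (E2*E2 + (conj X2 * (w*X2)).re)
          - Real.sqrt ((R^2*R^2 - (E1*E2 + (conj X1 * X2).re)^2)
            * (R^2*R^2 - (E2*E2 + (conj X2 * (w*X2)).re)^2)) := by linarith
    _ ≤ R^2*(E1*E2 + (conj X1 * (w*X2)).re) := key
  exact (mul_le_mul_iff_right₀ hR2).mp hfinal

lemma final_contra (E1 E2 R s : ℝ) (X1 X2 : ℂ)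
    (h1 : E1^2 + Complex.normSq X1 = R^2) (h2 : E2^2 + Complex.normSq X2 = R^2)
    (hs : 0 < s) (hsR : s^2 = R^2/2)
    (hE1 : E1 < -s) (hE2 : s < E2) :
    E1*E2 + (conj X1 * X2).re < 0 := by
  have hns1 : Complex.normSq X1 < R^2/2 := by nlinarith
  have hns2 : Complex.normSq X2 < R^2/2 := by nlinarith
  have hR2 : (0:ℝ) < R^2 := by nlinarith [mul_pos hs hs]
  have hcr : (conj X1 * X2).re ≤ Real.sqrt (Complex.normSq X1 * Complex.normSq X2) := by
    rw [crin, cns, cns]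
    exact rvcs2 X1.re X1.im X2.re X2.im
  have hsq : Real.sqrt (Complex.normSq X1 * Complex.normSq X2) < R^2/2 := by
    have hlt : Complex.normSq X1 * Complex.normSq X2 < (R^2/2)^2 := by
      nlinarith [Complex.normSq_nonneg X1, Complex.normSq_nonneg X2]
    calc Real.sqrt (Complex.normSq X1 * Complex.normSq X2)
        < Real.sqrt ((R^2/2)^2) :=
          Real.sqrt_lt_sqrt (mul_nonneg (Complex.normSq_nonneg X1) (Complex.normSq_nonneg X2)) hlt
    _ = R^2/2 := Real.sqrt_sq (by positivity)
  have hA : E1*E2 < -(R^2/2) := by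
    nlinarith [mul_pos (show (0:ℝ) < -s - E1 by linarith) (show (0:ℝ) < E2 - s by linarith),
      mul_pos hs hs]
  linarith [hcr.trans_lt hsq]

set_option maxHeartbeats 4000000 in
theorem rs_large_at_consecutive_roots (n : ℕ) (hn : 2 ≤ n) (N : ℕ) (hN : N = 2 ^ n)
    (z : ℤ → ℂ) (hz : ∀ j : ℤ, z j = Complex.exp (2 * Real.pi * Complex.I * j / N))
    (j : ℤ) (hj : Even j) (r : ℤ) (hr : r = -1 ∨ r = 1) :
    max (‖P n (z j)‖ ^ 2) (‖P n (z (j + r))‖ ^ 2) ≥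
      Real.sin (Real.pi / 8) ^ 2 * 2 ^ (n + 1) := by
  obtain ⟨m, hn2⟩ : ∃ m, n = m + 2 := ⟨n - 2, by omega⟩
  obtain ⟨t, ht⟩ := hj
  have hN0 : (N:ℂ) ≠ 0 := by
    rw [hN]; exact_mod_cast pow_ne_zero n (two_ne_zero)
  have hNC : (N:ℂ) = 2^(m+2) := by rw [hN, hn2]; push_cast; ring
  have hNR : (N:ℝ) = 2^(m+2) := by rw [hN, hn2]; push_cast; ring
  have hexp : ∀ i : ℤ, z i = Complex.exp (((2*π*(i:ℝ)/(N:ℝ)) : ℝ) * Complex.I) := by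
    intro i; rw [hz i]; congr 1; push_cast; ring
  have hns : ∀ i : ℤ, Complex.normSq (z i) = 1 := by
    intro i
    rw [hexp i, Complex.normSq_eq_norm_sq, Complex.norm_exp_ofReal_mul_I]
    norm_num
  have h2c : ((2:ℂ))^(m+1) ≠ 0 := pow_ne_zero _ two_ne_zero
  -- peeling the top two levels
  have hupow : (z j) ^ (2^(m+1)) = 1 := by
    rw [hz j, ← Complex.exp_nat_mul, ← Complex.exp_int_mul_two_pi_mul_I t]
    congr 1
    rw [hNC, pow_succ]
    push_cast [ht]
    field_simp
    ring
  have hvpow : (z (j+r)) ^ (2^(m+1)) = -1 := by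
    rw [hz (j+r), ← Complex.exp_nat_mul]
    have he : ((2^(m+1):ℕ):ℂ) * (2*(π:ℝ)*Complex.I*((j+r:ℤ):ℂ)/(N:ℂ))
        = (t:ℂ)*(2*(π:ℝ)*Complex.I) + (r:ℂ)*((π:ℝ)*Complex.I) := by
      rw [hNC, pow_succ]
      push_cast [ht]
      field_simp
      ring
    rw [he, Complex.exp_add, Complex.exp_int_mul_two_pi_mul_I, one_mul]
    rcases hr with h | h <;> subst h
    · push_cast
      rw [show (-1:ℂ)*((π:ℝ)*Complex.I) = -((π:ℝ)*Complex.I) by ring, Complex.exp_neg,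
        Complex.exp_pi_mul_I]
      norm_num
    · push_cast
      rw [one_mul, Complex.exp_pi_mul_I]
  have hPu : P n (z j) = 2 * P m (z j) := by
    rw [hn2, show m+2 = (m+1)+1 from rfl, P_succ, hupow, one_mul, P_succ, Q_succ]
    ring
  have hPv : P n (z (j+r)) = 2 * (z (j+r)) ^ (2^m) * Q m (z (j+r)) := by
    rw [hn2, show m+2 = (m+1)+1 from rfl, P_succ, hvpow, P_succ, Q_succ]
    ring
  -- the rotation factor
  have hw : ∀ k : ℕ, conj ((z j)^(2^k)) * (z (j+r))^(2^k)
      = Complex.exp ((((r:ℝ)*(2*π*(2:ℝ)^k/(N:ℝ))) : ℝ) * Complex.I) := by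
    intro k
    rw [hz j, hz (j+r), ← Complex.exp_nat_mul, ← Complex.exp_nat_mul,
      ← Complex.exp_conj, ← Complex.exp_add]
    congr 1
    simp only [map_mul, map_div₀, map_natCast, map_intCast, map_ofNat, Complex.conj_I,
      Complex.conj_ofReal]
    push_cast
    field_simp
    ring
  have hτeq : ∀ k : ℕ, 2*π*(2:ℝ)^k/(N:ℝ) = π*(2:ℝ)^k/2^(m+1) := by
    intro k
    rw [hNR, pow_succ]
    have : ((2:ℝ))^(m+1) ≠ 0 := by positivity
    field_simp
  have hwre : ∀ k : ℕ, (conj ((z j)^(2^k)) * (z (j+r))^(2^k)).re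
      = Real.cos (π*(2:ℝ)^k/2^(m+1)) := by
    intro k
    rw [hw k, Complex.exp_ofReal_mul_I_re]
    rcases hr with h | h <;> subst h
    · rw [show (((-1:ℤ):ℝ))*(2*π*(2:ℝ)^k/(N:ℝ)) = -(2*π*(2:ℝ)^k/(N:ℝ)) by push_cast; ring,
        Real.cos_neg, hτeq k]
    · rw [show (((1:ℤ):ℝ))*(2*π*(2:ℝ)^k/(N:ℝ)) = 2*π*(2:ℝ)^k/(N:ℝ) by push_cast; ring,
        hτeq k]
  -- range facts
  have hple : ∀ k : ℕ, k ≤ m → (2:ℝ)^k ≤ 2^m := fun k hk =>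
    pow_le_pow_right₀ (by norm_num) hk
  have hone : ∀ k : ℕ, (1:ℝ) ≤ 2^k := fun k => one_le_pow₀ (by norm_num)
  have h2m1 : (0:ℝ) < 2^(m+1) := by positivity
  have hσ1 : ∀ k : ℕ, 0 ≤ π*((2:ℝ)^k - 1)/2^(m+1) := by
    intro k
    apply div_nonneg _ h2m1.le
    have := hone k
    nlinarith [Real.pi_pos]
  have hσ2 : ∀ k : ℕ, k ≤ m → π*((2:ℝ)^k - 1)/2^(m+1) ≤ π/2 := by
    intro k hk
    rw [div_le_div_iff₀ h2m1 (by norm_num : (0:ℝ) < 2), pow_succ]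
    nlinarith [Real.pi_pos, hple k hk, hone k]
  have hτ1 : ∀ k : ℕ, 0 ≤ π*(2:ℝ)^k/2^(m+1) := by
    intro k; positivity
  have hτ2 : ∀ k : ℕ, k ≤ m → π*(2:ℝ)^k/2^(m+1) ≤ π/2 := by
    intro k hk
    rw [div_le_div_iff₀ h2m1 (by norm_num : (0:ℝ) < 2), pow_succ]
    nlinarith [Real.pi_pos, hple k hk, hone k]
  have h4k : ∀ k : ℕ, ((2:ℝ)^k)^2 = 4^k := by
    intro k
    rw [← pow_mul, show k*2 = 2*k by ring, pow_mul]
    norm_num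
  -- the main induction
  have main : ∀ k : ℕ, k ≤ m →
      4^k * Real.cos (π*((2:ℝ)^k - 1)/2^(m+1)) ≤
        cip (P k (z j)) (Q k (z j)) (P k (z (j+r))) (Q k (z (j+r))) := by
    intro k
    induction k with
    | zero =>
        intro _
        norm_num [cip, er, P_zero, Q_zero]
    | succ k ih =>
        intro hk1
        have hk : k ≤ m := Nat.le_of_succ_le hk1
        have ihk := ih hk
        have hnsc : Complex.normSq ((z j)^(2^k)) = 1 := by rw [map_pow, hns j, one_pow]
        have hnsd : Complex.normSq ((z (j+r))^(2^k)) = 1 := by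
          rw [map_pow, hns (j+r), one_pow]
        have hnw : Complex.normSq (conj ((z j)^(2^k)) * (z (j+r))^(2^k)) = 1 := by
          rw [Complex.normSq_mul, Complex.normSq_conj, hnsc, hnsd]; norm_num
        have hστ : π*((2:ℝ)^k - 1)/2^(m+1) + π*(2:ℝ)^k/2^(m+1)
            = π*((2:ℝ)^(k+1) - 1)/2^(m+1) := by
          rw [pow_succ]; ring
        have hp' : ((2:ℝ)^k)^2 * Real.cos (π*((2:ℝ)^k - 1)/2^(m+1)) ≤
            er (P k (z j)) (Q k (z j)) * er (P k (z (j+r))) (Q k (z (j+r)))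
              + (conj (conj (P k (z j)) * Q k (z j))
                  * (conj (P k (z (j+r))) * Q k (z (j+r)))).re := by
          rw [h4k k]; exact ihk
        have habs := abstract_step ((2:ℝ)^k) (π*((2:ℝ)^k - 1)/2^(m+1)) (π*(2:ℝ)^k/2^(m+1))
            (er (P k (z j)) (Q k (z j))) (er (P k (z (j+r))) (Q k (z (j+r))))
            (conj (P k (z j)) * Q k (z j)) (conj (P k (z (j+r))) * Q k (z (j+r)))
            (conj ((z j)^(2^k)) * (z (j+r))^(2^k))
            (by positivity) (er_norm (z j) (hns j) k) (er_norm (z (j+r)) (hns (j+r)) k)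
            hnw (hwre k) hp' (hσ1 k) (hσ2 k hk) (hτ1 k) (hτ2 k hk)
        rw [← hστ, P_succ, Q_succ, P_succ, Q_succ,
          step_id _ _ _ _ _ _ hnsc hnsd,
          show (conj ((z j)^(2^k)) * ((z (j+r))^(2^k))) * (P k (z j) * conj (Q k (z j)))
              * (conj (P k (z (j+r))) * Q k (z (j+r)))
            = conj (conj (P k (z j)) * Q k (z j))
              * ((conj ((z j)^(2^k)) * (z (j+r))^(2^k))
                  * (conj (P k (z (j+r))) * Q k (z (j+r)))) from by
            simp only [map_mul, Complex.conj_conj]; ring]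
        rw [h4k k] at habs
        have h41 : (4:ℝ)^(k+1) = 4^k*4 := pow_succ 4 k
        rw [h41]
        linarith [habs]
  -- conclusion
  have hCm := main m le_rfl
  have hcosm : 0 ≤ Real.cos (π*((2:ℝ)^m - 1)/2^(m+1)) :=
    Real.cos_nonneg_of_mem_Icc ⟨by linarith [hσ1 m, Real.pi_pos], hσ2 m le_rfl⟩
  have hC0 : 0 ≤ cip (P m (z j)) (Q m (z j)) (P m (z (j+r))) (Q m (z (j+r))) :=
    le_trans (mul_nonneg (by positivity) hcosm) hCm
  by_contra hcon
  push_neg at hcon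
  obtain ⟨h1, h2⟩ := max_lt_iff.mp hcon
  rw [Complex.sq_norm] at h1 h2
  have hu4 : Complex.normSq (P n (z j)) = 4 * Complex.normSq (P m (z j)) := by
    rw [hPu, Complex.normSq_mul]
    norm_num [Complex.normSq_apply]
  have hv4 : Complex.normSq (P n (z (j+r))) = 4 * Complex.normSq (Q m (z (j+r))) := by
    rw [hPv, Complex.normSq_mul, Complex.normSq_mul, map_pow, hns (j+r), one_pow]
    norm_num [Complex.normSq_apply]
  have hs2 : Real.sqrt 2 ^ 2 = 2 := Real.sq_sqrt (by norm_num)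
  have hs2le : Real.sqrt 2 ≤ 2 := by nlinarith [hs2, Real.sqrt_nonneg 2]
  have hsin : Real.sin (π/8)^2 = (2 - Real.sqrt 2)/4 := by
    rw [Real.sin_pi_div_eight, div_pow, Real.sq_sqrt (by linarith : (0:ℝ) ≤ 2 - Real.sqrt 2)]
    norm_num
  have h2n1 : (2:ℝ)^(n+1) = 4*2^(m+1) := by
    rw [hn2, show m+2+1 = (m+1)+2 from by ring, pow_add]
    norm_num [mul_comm]
  have hPmu_lt : Complex.normSq (P m (z j)) < Real.sin (π/8)^2 * 2^(m+1) := by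
    rw [hu4, h2n1] at h1; linarith
  have hQmv_lt : Complex.normSq (Q m (z (j+r))) < Real.sin (π/8)^2 * 2^(m+1) := by
    rw [hv4, h2n1] at h2; linarith
  have hEu := rs_energy (z j) (hns j) m
  have hEv := rs_energy (z (j+r)) (hns (j+r)) m
  have hp21 : (2:ℝ)^(m+1) = 2^m*2 := pow_succ 2 m
  rw [hsin] at hPmu_lt hQmv_lt
  have hpos2m : (0:ℝ) < 2^m := by positivity
  have he1_lt : er (P m (z j)) (Q m (z j)) < -(Real.sqrt 2/2 * 2^m) := by
    rw [er]
    nlinarith [hEu, hPmu_lt, hp21]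
  have he2_gt : Real.sqrt 2/2 * 2^m < er (P m (z (j+r))) (Q m (z (j+r))) := by
    rw [er]
    nlinarith [hEv, hQmv_lt, hp21]
  have hcontra := final_contra (er (P m (z j)) (Q m (z j)))
      (er (P m (z (j+r))) (Q m (z (j+r)))) ((2:ℝ)^m) (Real.sqrt 2/2 * 2^m)
      (conj (P m (z j)) * Q m (z j)) (conj (P m (z (j+r))) * Q m (z (j+r)))
      (er_norm (z j) (hns j) m) (er_norm (z (j+r)) (hns (j+r)) m)
      (by positivity)
      (by rw [mul_pow, div_pow, hs2]; ring)
      he1_lt he2_gt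
  have hCexp : cip (P m (z j)) (Q m (z j)) (P m (z (j+r))) (Q m (z (j+r)))
      = er (P m (z j)) (Q m (z j)) * er (P m (z (j+r))) (Q m (z (j+r)))
        + (conj (conj (P m (z j)) * Q m (z j))
            * (conj (P m (z (j+r))) * Q m (z (j+r)))).re := rfl
  rw [hCexp] at hC0
  linarith [hcontra]
end
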